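/- Suppose δ_n ≥ 0 satisfies δ_{n+1} ≤ δ_n/(1 + 2δ_n) + e_n with e_n → 0. Then δ_n → 0; in particular limsup δ_n = 0. -/

import Mathlib

theorem stmt_15 (δ e : ℕ → ℝ)
    (hδ0 : ∀ n, 0 ≤ δ n)
    (hrec : ∀ n, δ (n + 1) ≤ δ n / (1 + 2 * δ n) + e n)
    (he : Filter.Tendsto e Filter.atTop (nhds 0)) :
    Filter.Tendsto δ Filter.atTop (nhds 0) := by
  rw [Metric.tendsto_atTop]
  intro ε hε
  set ε' := ε / 2 with hε'def
  have hε' : 0 < ε' := by positivity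
  set c := ε' ^ 2 / (1 + 2 * ε') with hcdef
  have hc : 0 < c := by positivity
  obtain ⟨N, hN⟩ := Metric.tendsto_atTop.mp he c hc
  have heN : ∀ n ≥ N, e n < c := by
    intro n hn
    have h := hN n hn
    rw [Real.dist_eq, sub_zero] at h
    exact lt_of_le_of_lt (le_abs_self _) h
  have hpos : ∀ n, (0:ℝ) < 1 + 2 * δ n := fun n => by nlinarith [hδ0 n]
  have hposε : (0:ℝ) < 1 + 2 * ε' := by linarith
  -- decrease step while δ n > ε'
  have key_dec : ∀ n ≥ N, ε' < δ n → δ (n + 1) ≤ δ n - c := by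
    intro n hn hδn
    have hq' : ε' ^ 2 / (1 + 2 * ε') ≤ δ n ^ 2 / (1 + 2 * δ n) := by
      rw [div_le_div_iff₀ hposε (hpos n)]
      nlinarith [hδ0 n, mul_nonneg (sub_nonneg.2 hδn.le)
        (by nlinarith [hδ0 n, hε'.le] : (0:ℝ) ≤ δ n + ε' + 2 * δ n * ε')]
    have hq : 2 * c ≤ 2 * δ n ^ 2 / (1 + 2 * δ n) := by
      rw [mul_div_assoc]
      simp only [hcdef]
      linarith
    have heq : δ n / (1 + 2 * δ n) = δ n - 2 * δ n ^ 2 / (1 + 2 * δ n) := by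
      rw [eq_sub_iff_add_eq, ← add_div, div_eq_iff (hpos n).ne']
      ring
    have := hrec n
    have := heN n hn
    rw [heq] at *
    linarith
  -- existence of m ≥ N with δ m ≤ ε'
  have claim2 : ∃ m ≥ N, δ m ≤ ε' := by
    by_contra h
    push_neg at h
    have hdec : ∀ k : ℕ, δ (N + k) ≤ δ N - k * c := by
      intro k
      induction k with
      | zero => simp
      | succ k ih =>
        have h1 : ε' < δ (N + k) := h _ (Nat.le_add_right _ _)
        have h2 := key_dec (N + k) (Nat.le_add_right _ _) h1
        have : δ (N + (k + 1)) = δ (N + k + 1) := by ring_nf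
        rw [this]
        push_cast
        push_cast at ih
        linarith
    obtain ⟨k, hk⟩ := exists_nat_gt (δ N / c)
    have h3 := hdec k
    have h4 := hδ0 (N + k)
    have h5 : δ N / c < k := hk
    rw [div_lt_iff₀ hc] at h5
    linarith
  -- once ≤ ε', stays ≤ ε'
  have stay : ∀ n ≥ N, δ n ≤ ε' → δ (n + 1) ≤ ε' := by
    intro n hn hδn
    have h1 : δ n / (1 + 2 * δ n) ≤ ε' / (1 + 2 * ε') := by
      rw [div_le_div_iff₀ (hpos n) hposε]
      nlinarith [hδ0 n]
    have h2 : ε' / (1 + 2 * ε') + c ≤ ε' := by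
      rw [hcdef, ← add_div, div_le_iff₀ hposε]
      nlinarith
    have := hrec n
    have := heN n hn
    linarith
  obtain ⟨m, hm, hδm⟩ := claim2
  refine ⟨m, fun n hn => ?_⟩
  have hbound : ∀ n ≥ m, δ n ≤ ε' := by
    intro n hn
    induction n, hn using Nat.le_induction with
    | base => exact hδm
    | succ n hn ih => exact stay n (le_trans hm hn) ih
  rw [Real.dist_eq, sub_zero, abs_of_nonneg (hδ0 n)]
  have := hbound n hn
  rw [hε'def] at this
  linarith
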